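/- Let Greedy be the standard greedy algorithm for maximizing a submodular function f subject to a hereditary constraint family I, which iteratively adds the feasible element of maximum positive marginal gain (with a fixed tie-breaking rule). If A, B ⊆ V are disjoint and for every e ∈ B we have Greedy(A ∪ {e}) = Greedy(A), then Greedy(A ∪ B) = Greedy(A). -/
import Mathlib


open MeasureTheory Finset

/-- A set function is submodular. -/
def Submodular {V : Type*} [DecidableEq V] (f : Finset V → ℝ) : Prop :=
  ∀ A B : Finset V, f (A ∪ B) + f (A ∩ B) ≤ f A + f B

/-- The Lovász extension: expectation over a uniform threshold θ ∈ (0,1). -/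
noncomputable def lovasz {V : Type*} [Fintype V] [DecidableEq V]
    (f : Finset V → ℝ) (x : V → ℝ) : ℝ :=
  ∫ θ in Set.Ioo (0:ℝ) 1, f (Finset.univ.filter (fun i => θ ≤ x i))

/-- Characteristic vector of a finite set. -/
def charVec {V : Type*} [DecidableEq V] (S : Finset V) : V → ℝ :=
  fun i => if i ∈ S then 1 else 0
/-- One pass of the standard greedy algorithm with fuel `n`: at each step add the
feasible element of `X` with maximum nonnegative marginal gain, breaking ties by
the fixed linear order on `V` (choosing the least maximizer). -/
noncomputable def greedyAux {V : Type*} [Fintype V] [DecidableEq V] [LinearOrder V]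
    (f : Finset V → ℝ) (I : Finset V → Prop) [DecidablePred I]
    (X : Finset V) : ℕ → Finset V → Finset V
  | 0, S => S
  | (n+1), S =>
    let C := (X \ S).filter (fun e => I (insert e S) ∧ 0 ≤ f (insert e S) - f S)
    let M := C.filter (fun e => ∀ e' ∈ C, f (insert e' S) - f S ≤ f (insert e S) - f S)
    if h : M.Nonempty then greedyAux f I X n (insert (M.min' h) S) else S

/-- The standard greedy algorithm on ground set `X`. -/
noncomputable def greedy {V : Type*} [Fintype V] [DecidableEq V] [LinearOrder V]
    (f : Finset V → ℝ) (I : Finset V → Prop) [DecidablePred I]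
    (X : Finset V) : Finset V :=
  greedyAux f I X (Fintype.card V) ∅


section GreedyLoc
set_option linter.unusedSectionVars false
set_option linter.unusedVariables false
section
variable {V : Type*} [Fintype V] [DecidableEq V] [LinearOrder V]
  (f : Finset V → ℝ) (I : Finset V → Prop) [DecidablePred I]

noncomputable def gcand (X S : Finset V) : Finset V :=
  (X \ S).filter (fun e => I (insert e S) ∧ 0 ≤ f (insert e S) - f S)

noncomputable def gmaxi (X S : Finset V) : Finset V :=
  (gcand f I X S).filter
    (fun e => ∀ e' ∈ gcand f I X S, f (insert e' S) - f S ≤ f (insert e S) - f S)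

lemma greedyAux_succ (X : Finset V) (n : ℕ) (S : Finset V) :
    greedyAux f I X (n+1) S =
      if h : (gmaxi f I X S).Nonempty then
        greedyAux f I X n (insert ((gmaxi f I X S).min' h) S) else S := by
  rw [greedyAux]; rfl

lemma mem_gcand {X S : Finset V} {e : V} :
    e ∈ gcand f I X S ↔ (e ∈ X ∧ e ∉ S) ∧ I (insert e S) ∧ 0 ≤ f (insert e S) - f S := by
  simp [gcand]

lemma mem_gmaxi {X S : Finset V} {e : V} :
    e ∈ gmaxi f I X S ↔ e ∈ gcand f I X S ∧
      ∀ e' ∈ gcand f I X S, f (insert e' S) - f S ≤ f (insert e S) - f S := by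
  simp [gmaxi]

lemma gcand_mono {X X' S : Finset V} (h : X ⊆ X') : gcand f I X S ⊆ gcand f I X' S := by
  intro x hx
  rw [mem_gcand] at hx ⊢
  exact ⟨⟨h hx.1.1, hx.1.2⟩, hx.2⟩

lemma gmaxi_nonempty {X S : Finset V} (h : (gcand f I X S).Nonempty) :
    (gmaxi f I X S).Nonempty := by
  obtain ⟨e, he, hmax⟩ := Finset.exists_max_image (gcand f I X S)
    (fun e => f (insert e S) - f S) h
  exact ⟨e, (mem_gmaxi f I).2 ⟨he, hmax⟩⟩

lemma subset_greedyAux : ∀ (n : ℕ) (X S : Finset V), S ⊆ greedyAux f I X n S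
  | 0, X, S => subset_rfl
  | (n+1), X, S => by
    rw [greedyAux_succ]
    split
    · exact (Finset.subset_insert _ _).trans (subset_greedyAux n X _)
    · exact subset_rfl

lemma greedyAux_subset : ∀ (n : ℕ) (X S : Finset V), greedyAux f I X n S ⊆ X ∪ S
  | 0, X, S => subset_union_right
  | (n+1), X, S => by
    rw [greedyAux_succ]
    split
    case isTrue h =>
      refine (greedyAux_subset n X _).trans ?_
      have hm : (gmaxi f I X S).min' h ∈ X := by
        have := (mem_gmaxi f I).1 (Finset.min'_mem _ h)
        exact ((mem_gcand f I).1 this.1).1.1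
      rw [Finset.union_insert]
      exact Finset.insert_subset (mem_union_left _ hm) subset_rfl
    case isFalse h => exact subset_union_right

/-- Key step analysis for a single qualifying external element `b`. -/
lemma step_b {A : Finset V} {b : V} (hbA : b ∉ A) {n : ℕ} {S : Finset V} (hbS : b ∉ S)
    (hb : b ∉ greedyAux f I (A ∪ {b}) (n+1) S)
    (hq : b ∈ gcand f I (A ∪ {b}) S) :
    ∃ h : (gmaxi f I A S).Nonempty,
      (f (insert b S) - f S ≤ f (insert ((gmaxi f I A S).min' h) S) - f S) ∧
      (f (insert ((gmaxi f I A S).min' h) S) - f S ≤ f (insert b S) - f S →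
        (gmaxi f I A S).min' h < b) ∧
      greedyAux f I (A ∪ {b}) (n+1) S =
        greedyAux f I (A ∪ {b}) n (insert ((gmaxi f I A S).min' h) S) := by
  have hCb : (gcand f I (A ∪ {b}) S).Nonempty := ⟨b, hq⟩
  have hMb : (gmaxi f I (A ∪ {b}) S).Nonempty := gmaxi_nonempty f I hCb
  set mb := (gmaxi f I (A ∪ {b}) S).min' hMb with hmb_def
  have hmbM : mb ∈ gmaxi f I (A ∪ {b}) S := Finset.min'_mem _ hMb
  have hmbC : mb ∈ gcand f I (A ∪ {b}) S := ((mem_gmaxi f I).1 hmbM).1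
  have hmb_max : ∀ e' ∈ gcand f I (A ∪ {b}) S,
      f (insert e' S) - f S ≤ f (insert mb S) - f S := ((mem_gmaxi f I).1 hmbM).2
  -- b is never chosen
  have hmb_ne : mb ≠ b := by
    intro h
    apply hb
    rw [greedyAux_succ, dif_pos hMb]
    exact subset_greedyAux f I n _ _ (by rw [← hmb_def, h]; exact Finset.mem_insert_self _ _)
  have hmbA : mb ∈ A := by
    have := ((mem_gcand f I).1 hmbC).1.1
    rcases Finset.mem_union.1 this with h | h
    · exact h
    · exact absurd (Finset.mem_singleton.1 h) hmb_ne
  have hsub : gcand f I A S ⊆ gcand f I (A ∪ {b}) S := gcand_mono f I subset_union_left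
  have hmbCA : mb ∈ gcand f I A S := by
    rw [mem_gcand] at hmbC ⊢
    exact ⟨⟨hmbA, hmbC.1.2⟩, hmbC.2⟩
  have hmbMA : mb ∈ gmaxi f I A S :=
    (mem_gmaxi f I).2 ⟨hmbCA, fun e' he' => hmb_max e' (hsub he')⟩
  have hM : (gmaxi f I A S).Nonempty := ⟨mb, hmbMA⟩
  refine ⟨hM, ?_⟩
  set m := (gmaxi f I A S).min' hM with hm_def
  have hmM : m ∈ gmaxi f I A S := Finset.min'_mem _ hM
  have hmC : m ∈ gcand f I A S := ((mem_gmaxi f I).1 hmM).1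
  have hm_max : ∀ e' ∈ gcand f I A S,
      f (insert e' S) - f S ≤ f (insert m S) - f S := ((mem_gmaxi f I).1 hmM).2
  have h1 : f (insert mb S) - f S ≤ f (insert m S) - f S := hm_max mb hmbCA
  -- m ∈ Mb, so mb ≤ m; also m ≤ mb, hence m = mb
  have hmMb : m ∈ gmaxi f I (A ∪ {b}) S :=
    (mem_gmaxi f I).2 ⟨hsub hmC, fun e' he' => le_trans (hmb_max e' he') h1⟩
  have hmeq : m = mb :=
    le_antisymm (Finset.min'_le _ _ hmbMA) (Finset.min'_le _ _ hmMb)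
  refine ⟨le_trans (hmb_max b hq) h1, ?_, ?_⟩
  · intro hle
    have hbMb : b ∈ gmaxi f I (A ∪ {b}) S :=
      (mem_gmaxi f I).2 ⟨hq, fun e' he' => le_trans (hmb_max e' he') (le_trans h1 hle)⟩
    have : mb ≤ b := Finset.min'_le _ _ hbMb
    rw [hmeq]
    exact lt_of_le_of_ne this hmb_ne
  · rw [greedyAux_succ, dif_pos hMb, ← hmb_def, hmeq]

/-- If `b` does not qualify, the candidate sets agree. -/
lemma gcand_nq {A : Finset V} {b : V} {S : Finset V}
    (hnq : b ∉ gcand f I (A ∪ {b}) S) :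
    gcand f I (A ∪ {b}) S = gcand f I A S := by
  apply Finset.Subset.antisymm
  · intro x hx
    have hx' := (mem_gcand f I).1 hx
    rcases Finset.mem_union.1 hx'.1.1 with h | h
    · exact (mem_gcand f I).2 ⟨⟨h, hx'.1.2⟩, hx'.2⟩
    · exact absurd hx (Finset.mem_singleton.1 h ▸ hnq)
  · exact gcand_mono f I subset_union_left

end
section
variable {V : Type*} [Fintype V] [DecidableEq V] [LinearOrder V]
  (f : Finset V → ℝ) (I : Finset V → Prop) [DecidablePred I]

lemma min'_congr {s t : Finset V} (h : s = t) (hs : s.Nonempty) :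
    s.min' hs = t.min' (h ▸ hs) := by subst h; rfl

lemma loc_aux (A B : Finset V) (hAB : Disjoint A B) :
    ∀ (n : ℕ) (S : Finset V), Disjoint B S →
      (∀ b ∈ B, b ∉ greedyAux f I (A ∪ {b}) n S) →
      greedyAux f I (A ∪ B) n S = greedyAux f I A n S
  | 0, S, _, _ => rfl
  | (n+1), S, hBS, hb => by
    have hq_iff : ∀ b ∈ B, (b ∈ gcand f I (A ∪ B) S ↔ b ∈ gcand f I (A ∪ {b}) S) := by
      intro b hbB
      rw [mem_gcand, mem_gcand]
      simp [Finset.mem_union, hbB]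
    by_cases hM : (gmaxi f I A S).Nonempty
    · -- main case
      set m := (gmaxi f I A S).min' hM with hm_def
      have hmM : m ∈ gmaxi f I A S := Finset.min'_mem _ hM
      have hmC : m ∈ gcand f I A S := ((mem_gmaxi f I).1 hmM).1
      have hm_max : ∀ e' ∈ gcand f I A S,
          f (insert e' S) - f S ≤ f (insert m S) - f S := ((mem_gmaxi f I).1 hmM).2
      have hmA : m ∈ A := ((mem_gcand f I).1 hmC).1.1
      have hmB : m ∉ B := Finset.disjoint_left.1 hAB hmA
      -- facts for qualifying b ∈ B
      have hbf : ∀ b ∈ B, b ∈ gcand f I (A ∪ B) S →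
          (f (insert b S) - f S ≤ f (insert m S) - f S) ∧
          (f (insert m S) - f S ≤ f (insert b S) - f S → m < b) ∧
          greedyAux f I (A ∪ {b}) (n+1) S =
            greedyAux f I (A ∪ {b}) n (insert m S) := by
        intro b hbB hbq
        obtain ⟨h', h1, h2, h3⟩ := step_b f I (Finset.disjoint_right.1 hAB hbB)
          (Finset.disjoint_left.1 hBS hbB) (hb b hbB) ((hq_iff b hbB).1 hbq)
        exact ⟨h1, h2, h3⟩
      -- membership of A-candidates transfers
      have hsub : gcand f I A S ⊆ gcand f I (A ∪ B) S := gcand_mono f I subset_union_left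
      have hAmem : ∀ x ∈ gcand f I (A ∪ B) S, x ∈ A → x ∈ gcand f I A S := by
        intro x hx hxA
        have hx' := (mem_gcand f I).1 hx
        exact (mem_gcand f I).2 ⟨⟨hxA, hx'.1.2⟩, hx'.2⟩
      have hmax2 : ∀ e' ∈ gcand f I (A ∪ B) S,
          f (insert e' S) - f S ≤ f (insert m S) - f S := by
        intro e' he'
        rcases Finset.mem_union.1 ((mem_gcand f I).1 he').1.1 with h | h
        · exact hm_max e' (hAmem e' he' h)
        · exact (hbf e' h he').1
      have hmm2 : m ∈ gmaxi f I (A ∪ B) S := (mem_gmaxi f I).2 ⟨hsub hmC, hmax2⟩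
      have hM2 : (gmaxi f I (A ∪ B) S).Nonempty := ⟨m, hmm2⟩
      have hmin2 : (gmaxi f I (A ∪ B) S).min' hM2 = m := by
        refine le_antisymm (Finset.min'_le _ _ hmm2) (Finset.le_min' _ _ _ ?_)
        intro x hx
        have hx1 := (mem_gmaxi f I).1 hx
        rcases Finset.mem_union.1 ((mem_gcand f I).1 hx1.1).1.1 with h | h
        · have : x ∈ gmaxi f I A S :=
            (mem_gmaxi f I).2 ⟨hAmem x hx1.1 h, fun e' he' => hx1.2 e' (hsub he')⟩
          exact Finset.min'_le _ _ this
        · exact le_of_lt ((hbf x h hx1.1).2.1 (hx1.2 m (hsub hmC)))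
      rw [greedyAux_succ, greedyAux_succ, dif_pos hM2, dif_pos hM, hmin2, ← hm_def]
      refine loc_aux A B hAB n (insert m S)
        (Finset.disjoint_insert_right.2 ⟨hmB, hBS⟩) ?_
      intro b hbB
      by_cases hq : b ∈ gcand f I (A ∪ {b}) S
      · obtain ⟨h', _, _, h3⟩ := step_b f I (Finset.disjoint_right.1 hAB hbB)
          (Finset.disjoint_left.1 hBS hbB) (hb b hbB) hq
        have hmin_eq : (gmaxi f I A S).min' h' = m := rfl
        rw [hmin_eq] at h3
        exact fun hmem => hb b hbB (h3 ▸ hmem)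
      · have hceq : gcand f I (A ∪ {b}) S = gcand f I A S := gcand_nq f I hq
        have hMeq : gmaxi f I (A ∪ {b}) S = gmaxi f I A S := by
          rw [gmaxi, gmaxi, hceq]
        have hne : (gmaxi f I (A ∪ {b}) S).Nonempty := hMeq ▸ hM
        have h3 : greedyAux f I (A ∪ {b}) (n+1) S =
            greedyAux f I (A ∪ {b}) n (insert m S) := by
          rw [greedyAux_succ, dif_pos hne, min'_congr hMeq hne]
        exact fun hmem => hb b hbB (h3 ▸ hmem)
    · -- no candidates at all
      have hCA : gcand f I A S = ∅ := by
        by_contra h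
        exact hM (gmaxi_nonempty f I (Finset.nonempty_of_ne_empty h))
      have hC2 : gcand f I (A ∪ B) S = ∅ := by
        rw [Finset.eq_empty_iff_forall_notMem]
        intro x hx
        rcases Finset.mem_union.1 ((mem_gcand f I).1 hx).1.1 with h | h
        · have hx' := (mem_gcand f I).1 hx
          have : x ∈ gcand f I A S := (mem_gcand f I).2 ⟨⟨h, hx'.1.2⟩, hx'.2⟩
          rw [hCA] at this
          exact absurd this (Finset.notMem_empty x)
        · obtain ⟨h', _, _, _⟩ := step_b f I (Finset.disjoint_right.1 hAB h)
            (Finset.disjoint_left.1 hBS h) (hb x h) ((hq_iff x h).1 hx)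
          exact hM h'
      have hM2 : ¬ (gmaxi f I (A ∪ B) S).Nonempty := by
        rw [Finset.not_nonempty_iff_eq_empty, gmaxi, hC2]
        simp
      rw [greedyAux_succ, greedyAux_succ, dif_neg hM2, dif_neg hM]

end

end GreedyLoc

/-- Lemma 2 (localization): if adding any single element of `B` does not change the
greedy solution on `A`, then neither does adding all of `B`. -/
theorem greedy_localization {V : Type*} [Fintype V] [DecidableEq V] [LinearOrder V]
    (f : Finset V → ℝ) (I : Finset V → Prop) [DecidablePred I]
    (hf : Submodular f) (hnn : ∀ A : Finset V, 0 ≤ f A)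
    (hher : ∀ A B : Finset V, A ⊆ B → I B → I A) (hempty : I ∅)
    (A B : Finset V) (hdisj : Disjoint A B)
    (hB : ∀ e ∈ B, greedy f I (A ∪ {e}) = greedy f I A) :
    greedy f I (A ∪ B) = greedy f I A := by
  have hAsub : greedy f I A ⊆ A := by
    have := greedyAux_subset f I (Fintype.card V) A ∅
    simpa [greedy] using this
  show greedyAux f I (A ∪ B) (Fintype.card V) ∅ = greedyAux f I A (Fintype.card V) ∅
  refine loc_aux f I A B hdisj (Fintype.card V) ∅ (Finset.disjoint_empty_right B) ?_
  intro b hbB hmem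
  have : b ∈ greedy f I A := by rw [← hB b hbB]; exact hmem
  exact Finset.disjoint_left.1 hdisj (hAsub this) hbB
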